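/- For any real Y, pairwise distinct real numbers λ₁,…,λ_{n+1}, and any j with 1 ≤ j ≤ n+1, ∑_{σ∈S_{n+1}} ∏_{k=1}^{n} (λ_{σ(j)} − Y)/(λ_{σ(k)} − λ_{σ(k+1)}) = (−1)^{j−1} · C(n, j−1). -/

import Mathlib

open Finset

open Equiv

def insPerm {n : ℕ} (q t : Fin (n+2)) (e : Equiv.Perm (Fin (n+1))) : Equiv.Perm (Fin (n+2)) :=
  (finSuccEquiv' t).trans ((Equiv.optionCongr e).trans (finSuccEquiv' q).symm)

lemma insPerm_self {n : ℕ} (q t : Fin (n+2)) (e : Equiv.Perm (Fin (n+1))) :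
    insPerm q t e t = q := by simp [insPerm]

lemma insPerm_succAbove {n : ℕ} (q t : Fin (n+2)) (e : Equiv.Perm (Fin (n+1))) (m : Fin (n+1)) :
    insPerm q t e (t.succAbove m) = q.succAbove (e m) := by simp [insPerm]

lemma insPerm_bijective {n : ℕ} (q : Fin (n+2)) :
    Function.Bijective (fun p : Fin (n+2) × Equiv.Perm (Fin (n+1)) => insPerm q p.1 p.2) := by
  rw [Fintype.bijective_iff_injective_and_card]
  constructor
  · rintro ⟨t, e⟩ ⟨t', e'⟩ h
    simp only at h
    have ht : t = t' := by
      have h1 : insPerm q t e t = q := insPerm_self q t e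
      have h2 : insPerm q t' e' t' = q := insPerm_self q t' e'
      rw [h] at h1
      exact (insPerm q t' e').injective (h1.trans h2.symm)
    subst ht
    have he : e = e' := by
      ext m
      have := congrArg (fun σ : Equiv.Perm (Fin (n+2)) => σ (t.succAbove m)) h
      simp only [insPerm_succAbove] at this
      exact congrArg Fin.val (Fin.succAbove_right_injective (p := q) this)
    rw [he]
  · simp [Fintype.card_perm, Fintype.card_prod, Nat.factorial_succ]

noncomputable def Wf {n : ℕ} (v : Fin (n+2) → ℝ) (q : Fin (n+2)) (e : Equiv.Perm (Fin (n+1))) :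
    ℕ → ℝ :=
  fun s => if h : s < n+1 then v (q.succAbove (e ⟨s, h⟩)) else 0

noncomputable def Rf {n : ℕ} (v : Fin (n+2) → ℝ) (q : Fin (n+2)) (e : Equiv.Perm (Fin (n+1))) : ℝ :=
  ∏ k ∈ range n, (Wf v q e k - Wf v q e (k+1))⁻¹

lemma insPerm_mk_lt {n : ℕ} (q : Fin (n+2)) (e : Equiv.Perm (Fin (n+1))) {s u : ℕ}
    (hs : s < n+2) (hu : u < s) (hu2 : u < n+1) :
    insPerm q ⟨s, hs⟩ e ⟨u, lt_trans hu hs⟩ = q.succAbove (e ⟨u, hu2⟩) := by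
  have h1 : ((⟨u, hu2⟩ : Fin (n+1)).castSucc : Fin (n+2)) = ⟨u, lt_trans hu hs⟩ := rfl
  have h2 : (⟨s, hs⟩ : Fin (n+2)).succAbove ⟨u, hu2⟩ = ⟨u, lt_trans hu hs⟩ := by
    rw [Fin.succAbove_of_castSucc_lt, h1]
    rw [h1]; exact hu
  rw [← h2, insPerm_succAbove]

lemma insPerm_mk_gt {n : ℕ} (q : Fin (n+2)) (e : Equiv.Perm (Fin (n+1))) {s u : ℕ}
    (hs : s < n+2) (hu : s < u) (hu2 : u < n+2) :
    insPerm q ⟨s, hs⟩ e ⟨u, hu2⟩ = q.succAbove (e ⟨u-1, by omega⟩) := by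
  have h2 : (⟨s, hs⟩ : Fin (n+2)).succAbove ⟨u-1, by omega⟩ = ⟨u, hu2⟩ := by
    rw [Fin.succAbove_of_le_castSucc]
    · ext; simp [Fin.succ_mk]; omega
    · rw [Fin.le_def]; simp; omega
  rw [← h2, insPerm_succAbove]

lemma insPerm_vals {n : ℕ} (v : Fin (n+2) → ℝ) (q : Fin (n+2)) (e : Equiv.Perm (Fin (n+1)))
    {s u : ℕ} (hs : s < n+2) (hu2 : u < n+2) :
    v (insPerm q ⟨s, hs⟩ e ⟨u, hu2⟩)
      = if u < s then Wf v q e u else if u = s then v q else Wf v q e (u-1) := by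
  rcases lt_trichotomy u s with h | h | h
  · have hu1 : u < n+1 := by omega
    rw [if_pos h, Wf, dif_pos hu1]
    have := insPerm_mk_lt q e hs h hu1
    rw [show (⟨u, hu2⟩ : Fin (n+2)) = ⟨u, lt_trans h hs⟩ from rfl, this]
  · rw [if_neg (by omega), if_pos h]
    rw [show (⟨u, hu2⟩ : Fin (n+2)) = ⟨s, hs⟩ from by subst h; rfl, insPerm_self]
  · rw [if_neg (by omega), if_neg (by omega), Wf, dif_pos (by omega : u - 1 < n+1)]
    rw [insPerm_mk_gt q e hs h hu2]

lemma chainProd_eq {m : ℕ} (g : Fin (m+1) → ℝ) (G : ℕ → ℝ)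
    (hG : ∀ u (h : u < m+1), G u = g ⟨u, h⟩) :
    ∏ k : Fin m, (g k.castSucc - g k.succ)⁻¹ = ∏ k ∈ range m, (G k - G (k+1))⁻¹ := by
  rw [← Fin.prod_univ_eq_prod_range (fun k => (G k - G (k+1))⁻¹) m]
  refine Finset.prod_congr rfl fun k _ => ?_
  rw [hG k (by omega), hG (k+1) (by omega)]
  rfl

lemma Rf_eq {n : ℕ} (v : Fin (n+2) → ℝ) (q : Fin (n+2)) (e : Equiv.Perm (Fin (n+1))) :
    ∏ k : Fin n, (v (q.succAbove (e k.castSucc)) - v (q.succAbove (e k.succ)))⁻¹ = Rf v q e := by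
  rw [Rf]
  exact chainProd_eq (m := n) (fun k => v (q.succAbove (e k))) (Wf v q e)
    (fun u h => by unfold Wf; rw [dif_pos h])

lemma Wf_ne_q {n : ℕ} {v : Fin (n+2) → ℝ} (hv : Function.Injective v) (q : Fin (n+2))
    (e : Equiv.Perm (Fin (n+1))) {u : ℕ} (hu : u < n+1) : Wf v q e u ≠ v q := by
  unfold Wf; rw [dif_pos hu]
  exact fun h => Fin.succAbove_ne q _ (hv h)

lemma Wf_ne_Wf {n : ℕ} {v : Fin (n+2) → ℝ} (hv : Function.Injective v) (q : Fin (n+2))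
    (e : Equiv.Perm (Fin (n+1))) {u u' : ℕ} (hu : u < n+1) (hu' : u' < n+1) (hne : u ≠ u') :
    Wf v q e u ≠ Wf v q e u' := by
  unfold Wf; rw [dif_pos hu, dif_pos hu']
  intro h
  have := e.injective (Fin.succAbove_right_injective (p := q) (hv h))
  exact hne (by simpa using congrArg Fin.val this)

lemma prodP {n : ℕ} {v : Fin (n+2) → ℝ} (hv : Function.Injective v) (q : Fin (n+2))
    (e : Equiv.Perm (Fin (n+1))) {s : ℕ} (hs : s < n+2) :
    ∏ k : Fin (n+1), (v (insPerm q ⟨s, hs⟩ e k.castSucc) - v (insPerm q ⟨s, hs⟩ e k.succ))⁻¹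
    = (if s = 0 then (v q - Wf v q e 0)⁻¹
       else if s = n+1 then (Wf v q e n - v q)⁻¹
       else (Wf v q e (s-1) - v q)⁻¹ + (v q - Wf v q e s)⁻¹) * Rf v q e := by
  have hG : ∀ u (h : u < n+2),
      (if u < s then Wf v q e u else if u = s then v q else Wf v q e (u-1))
        = v (insPerm q ⟨s, hs⟩ e ⟨u, h⟩) := fun u h => (insPerm_vals v q e hs h).symm
  rw [chainProd_eq (m := n+1) (fun k => v (insPerm q ⟨s, hs⟩ e k)) _ hG]
  set W := Wf v q e with hW
  rcases Nat.eq_zero_or_pos s with rfl | hpos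
  · rw [if_pos rfl, Finset.prod_range_succ']
    have e1 : ∀ k, ((if k+1 < 0 then W (k+1) else if k+1 = 0 then v q else W (k+1-1))
        - (if k+1+1 < 0 then W (k+1+1) else if k+1+1 = 0 then v q else W (k+1+1-1)))⁻¹
        = (W k - W (k+1))⁻¹ := by
      intro k
      rw [if_neg (by omega), if_neg (by omega), if_neg (by omega), if_neg (by omega),
        Nat.add_sub_cancel, Nat.add_sub_cancel]
    have e2 : ((if 0 < 0 then W 0 else if (0:ℕ) = 0 then v q else W (0-1))
        - (if 0+1 < 0 then W (0+1) else if 0+1 = 0 then v q else W (0+1-1)))⁻¹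
        = (v q - W 0)⁻¹ := by
      rw [if_neg (by omega), if_pos rfl, if_neg (by omega), if_neg (by omega)]
    rw [Finset.prod_congr rfl (fun k _ => e1 k), e2, Rf, ← hW, mul_comm]
  rcases Nat.lt_or_ge s (n+1) with hlt | hge
  swap
  · -- s = n+1
    have hseq : s = n+1 := by omega
    subst hseq
    rw [if_neg (by omega), if_pos rfl, Finset.prod_range_succ]
    have e1 : ∀ k, k ∈ range n → ((if k < n+1 then W k else if k = n+1 then v q else W (k-1))
        - (if k+1 < n+1 then W (k+1) else if k+1 = n+1 then v q else W (k+1-1)))⁻¹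
        = (W k - W (k+1))⁻¹ := by
      intro k hk
      rw [mem_range] at hk
      rw [if_pos (by omega), if_pos (by omega)]
    have e2 : ((if n < n+1 then W n else if n = n+1 then v q else W (n-1))
        - (if n+1 < n+1 then W (n+1) else if n+1 = n+1 then v q else W (n+1-1)))⁻¹
        = (W n - v q)⁻¹ := by
      rw [if_pos (by omega), if_neg (by omega), if_pos rfl]
    rw [Finset.prod_congr rfl e1, e2, Rf, ← hW, mul_comm]
  · -- interior
    obtain ⟨s', rfl⟩ : ∃ s', s = s'+1 := ⟨s-1, by omega⟩
    rw [if_neg (by omega), if_neg (by omega), Nat.add_sub_cancel]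
    have hsplit : ∏ k ∈ range (n+1), ((if k < s'+1 then W k else if k = s'+1 then v q else W (k-1))
        - (if k+1 < s'+1 then W (k+1) else if k+1 = s'+1 then v q else W (k+1-1)))⁻¹
      = ((∏ k ∈ range s', (W k - W (k+1))⁻¹) * ∏ k ∈ Ico (s'+2) (n+1), (W (k-1) - W k)⁻¹)
        * ((W s' - v q)⁻¹ * (v q - W (s'+1))⁻¹) := by
      rw [Finset.range_eq_Ico, ← Finset.prod_Ico_consecutive _ (Nat.zero_le (s'+2)) (by omega),
        ← Finset.range_eq_Ico, Finset.prod_range_succ, Finset.prod_range_succ]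
      have e1 : ∀ k, k < s' → ((if k < s'+1 then W k else if k = s'+1 then v q else W (k-1))
          - (if k+1 < s'+1 then W (k+1) else if k+1 = s'+1 then v q else W (k+1-1)))⁻¹
          = (W k - W (k+1))⁻¹ := by
        intro k hk
        rw [if_pos (by omega), if_pos (by omega)]
      have e2 : ((if s' < s'+1 then W s' else if s' = s'+1 then v q else W (s'-1))
          - (if s'+1 < s'+1 then W (s'+1) else if s'+1 = s'+1 then v q else W (s'+1-1)))⁻¹
          = (W s' - v q)⁻¹ := by
        rw [if_pos (by omega), if_neg (by omega), if_pos rfl]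
      have e3 : ((if s'+1 < s'+1 then W (s'+1) else if s'+1 = s'+1 then v q else W (s'+1-1))
          - (if s'+2 < s'+1 then W (s'+2) else if s'+2 = s'+1 then v q else W (s'+2-1)))⁻¹
          = (v q - W (s'+1))⁻¹ := by
        rw [if_neg (by omega), if_pos rfl, if_neg (by omega), if_neg (by omega)]
        norm_num
      rw [e2, e3, Finset.prod_congr rfl (fun k hk => e1 k (mem_range.mp hk))]
      have e4 : ∏ k ∈ Ico (s'+2) (n+1), ((if k < s'+1 then W k else if k = s'+1 then v q else W (k-1))
          - (if k+1 < s'+1 then W (k+1) else if k+1 = s'+1 then v q else W (k+1-1)))⁻¹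
          = ∏ k ∈ Ico (s'+2) (n+1), (W (k-1) - W k)⁻¹ := by
        refine Finset.prod_congr rfl fun k hk => ?_
        rw [mem_Ico] at hk
        rw [if_neg (by omega), if_neg (by omega), if_neg (by omega), if_neg (by omega),
          Nat.add_sub_cancel]
      rw [e4]; ring
    rw [hsplit]
    have hRf : Rf v q e = ((∏ k ∈ range s', (W k - W (k+1))⁻¹)
        * ∏ k ∈ Ico (s'+2) (n+1), (W (k-1) - W k)⁻¹) * (W s' - W (s'+1))⁻¹ := by
      have e5 : ∏ k ∈ Ico (s'+2) (n+1), (W (k-1) - W k)⁻¹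
          = ∏ k ∈ Ico (s'+1) n, (W k - W (k+1))⁻¹ := by
        rw [Finset.prod_Ico_eq_prod_range, Finset.prod_Ico_eq_prod_range]
        have hnn : n+1 - (s'+2) = n - (s'+1) := by omega
        rw [hnn]
        refine Finset.prod_congr rfl fun k _ => ?_
        have h1 : s'+2+k-1 = s'+1+k := by omega
        have h2 : s'+2+k = s'+1+k+1 := by omega
        rw [h1, h2]
      rw [e5, Rf, ← hW, Finset.range_eq_Ico,
        ← Finset.prod_Ico_consecutive _ (Nat.zero_le (s'+1)) (by omega : s'+1 ≤ n),
        ← Finset.range_eq_Ico, Finset.prod_range_succ]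
      ring
    rw [hRf]
    have ha : W s' - v q ≠ 0 := sub_ne_zero.mpr (Wf_ne_q hv q e (by omega))
    have hb : v q - W (s'+1) ≠ 0 :=
      sub_ne_zero.mpr (fun h => (Wf_ne_q hv q e (by omega : s'+1 < n+1)) h.symm)
    have hab : W s' - W (s'+1) ≠ 0 :=
      sub_ne_zero.mpr (Wf_ne_Wf hv q e (by omega) (by omega) (by omega))
    rw [show (W s' - v q)⁻¹ * (v q - W (s'+1))⁻¹
        = ((W s' - v q)⁻¹ + (v q - W (s'+1))⁻¹) * (W s' - W (s'+1))⁻¹ from by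
      field_simp; ring]
    ring

lemma keyStep {n : ℕ} {v : Fin (n+2) → ℝ} (hv : Function.Injective v)
    (q i j : Fin (n+2)) (hqi : q ≠ i) (i' : Fin (n+1)) (hi' : q.succAbove i' = i)
    (e : Equiv.Perm (Fin (n+1))) :
    ∑ t : Fin (n+2), (if insPerm q t e j = i then
        ∏ k : Fin (n+1), (v (insPerm q t e k.castSucc) - v (insPerm q t e k.succ))⁻¹ else 0)
    = ((if ((e.symm i' : ℕ) = (j:ℕ)) then (v i - v q)⁻¹ else 0)
       + (if ((e.symm i' : ℕ) + 1 = (j:ℕ)) then (v q - v i)⁻¹ else 0)) * Rf v q e := by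
  set W := Wf v q e with hW
  set R := Rf v q e with hR
  set r := ((e.symm i' : ℕ)) with hr
  have hrlt : r < n+1 := (e.symm i').isLt
  have hWr : W r = v i := by
    rw [hW]; unfold Wf; rw [dif_pos hrlt]
    have : (⟨r, hrlt⟩ : Fin (n+1)) = e.symm i' := rfl
    rw [this, Equiv.apply_symm_apply, hi']
  -- the summand as a function of the ℕ-value of t
  set PP : ℕ → ℝ := fun s => (if s = 0 then (v q - W 0)⁻¹
       else if s = n+1 then (W n - v q)⁻¹
       else (W (s-1) - v q)⁻¹ + (v q - W s)⁻¹) * R with hPP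
  set TT : ℕ → ℝ := fun s =>
    if ((j:ℕ) < s ∧ r = (j:ℕ)) then PP s else
      (if (s < (j:ℕ) ∧ r + 1 = (j:ℕ)) then PP s else 0) with hTT
  have hcond : ∀ (s : ℕ) (hs : s < n+2), (insPerm q ⟨s, hs⟩ e j = i
      ↔ (((j:ℕ) < s ∧ r = (j:ℕ)) ∨ (s < (j:ℕ) ∧ r + 1 = (j:ℕ)))) := by
    intro s hs
    rcases lt_trichotomy (j:ℕ) s with h | h | h
    · have hj1 : (j:ℕ) < n+1 := by omega
      have hjeq : j = ⟨(j:ℕ), lt_trans h hs⟩ := by ext; rfl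
      rw [hjeq, insPerm_mk_lt q e hs h hj1, ← hi']
      constructor
      · intro hh
        have := Fin.succAbove_right_injective (p := q) hh
        left
        refine ⟨h, ?_⟩
        have : (⟨(j:ℕ), hj1⟩ : Fin (n+1)) = e.symm i' := by
          rw [← this]; simp
        rw [hr, ← this]
      · rintro (⟨_, hrj⟩ | ⟨hc, _⟩)
        · congr 1
          have : e.symm i' = (⟨(j:ℕ), hj1⟩ : Fin (n+1)) := by ext; rw [← hrj]
          rw [← this, Equiv.apply_symm_apply]
        · omega
    · have hjeq : j = ⟨s, hs⟩ := by ext; exact h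
      rw [hjeq, insPerm_self]
      constructor
      · intro hh; exact absurd hh hqi
      · rintro (⟨hc, _⟩ | ⟨hc, _⟩) <;> omega
    · have hj1 : (j:ℕ) - 1 < n+1 := by omega
      have hjeq : j = ⟨(j:ℕ), j.isLt⟩ := by ext; rfl
      rw [hjeq, insPerm_mk_gt q e hs h j.isLt, ← hi']
      constructor
      · intro hh
        have := Fin.succAbove_right_injective (p := q) hh
        right
        refine ⟨h, ?_⟩
        have h2 : (⟨(j:ℕ)-1, by omega⟩ : Fin (n+1)) = e.symm i' := by
          rw [← this]; simp
        have := congrArg Fin.val h2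
        simp only at this
        omega
      · rintro (⟨hc, _⟩ | ⟨_, hrj⟩)
        · omega
        · congr 1
          have : e.symm i' = (⟨(j:ℕ)-1, by omega⟩ : Fin (n+1)) := by ext; simp; omega
          rw [← this, Equiv.apply_symm_apply]
  have hbody : ∀ t : Fin (n+2), (if insPerm q t e j = i then
        ∏ k : Fin (n+1), (v (insPerm q t e k.castSucc) - v (insPerm q t e k.succ))⁻¹ else 0)
      = TT (t : ℕ) := by
    intro t
    have ht : t = ⟨(t:ℕ), t.isLt⟩ := by ext; rfl
    simp only [hTT]
    by_cases hcc : ((j:ℕ) < (t:ℕ) ∧ r = (j:ℕ)) ∨ ((t:ℕ) < (j:ℕ) ∧ r + 1 = (j:ℕ))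
    · rw [if_pos (by rw [ht]; exact (hcond (t:ℕ) t.isLt).mpr hcc)]
      have hPv : ∏ k : Fin (n+1), (v (insPerm q t e k.castSucc) - v (insPerm q t e k.succ))⁻¹
          = PP (t:ℕ) := by
        rw [hPP, ht]
        exact prodP hv q e t.isLt
      rw [hPv]
      rcases hcc with hcc | hcc
      · simp only [if_pos hcc]
      · have hne : ¬((j:ℕ) < (t:ℕ) ∧ r = (j:ℕ)) := by omega
        simp only [if_neg hne, if_pos hcc]
    · rw [if_neg (fun hh => hcc ((hcond (t:ℕ) t.isLt).mp (ht ▸ hh)))]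
      push_neg at hcc
      obtain ⟨h1, h2⟩ := hcc
      by_cases ha : (j:ℕ) < (t:ℕ) ∧ r = (j:ℕ)
      · exact absurd ha.2 (h1 ha.1)
      · rw [if_neg ha, if_neg (fun hb => h2 hb.1 hb.2)]
  rw [Finset.sum_congr rfl (fun t _ => hbody t), Fin.sum_univ_eq_sum_range TT (n+2)]
  -- split the sum into the two groups
  have hsplitTT : ∀ s, TT s = (if ((j:ℕ) < s ∧ r = (j:ℕ)) then PP s else 0)
      + (if (s < (j:ℕ) ∧ r + 1 = (j:ℕ)) then PP s else 0) := by
    intro s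
    simp only [hTT]
    by_cases ha : (j:ℕ) < s ∧ r = (j:ℕ)
    · rw [if_pos ha, if_pos ha, if_neg (by omega), add_zero]
    · rw [if_neg ha, if_neg ha, zero_add]
  rw [Finset.sum_congr rfl (fun s _ => hsplitTT s), Finset.sum_add_distrib]
  -- second group (front part)
  have hfront : ∑ s ∈ range (n+2), (if (s < (j:ℕ) ∧ r + 1 = (j:ℕ)) then PP s else 0)
      = (if r + 1 = (j:ℕ) then (v q - v i)⁻¹ else 0) * R := by
    by_cases hc2 : r + 1 = (j:ℕ)
    swap
    · rw [if_neg hc2, zero_mul]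
      exact Finset.sum_eq_zero fun s _ => if_neg (fun hh => hc2 hh.2)
    rw [if_pos hc2]
    have hjle : (j:ℕ) < n+2 := j.isLt
    have hsub : ∑ s ∈ range (n+2), (if (s < (j:ℕ) ∧ r + 1 = (j:ℕ)) then PP s else 0)
        = ∑ s ∈ range (j:ℕ), PP s := by
      rw [← Finset.sum_subset (Finset.range_subset_range.mpr (by omega : (j:ℕ) ≤ n+2))
        (fun x _ hx => if_neg (fun hh => hx (mem_range.mpr hh.1)))]
      exact Finset.sum_congr rfl fun s hs => if_pos ⟨mem_range.mp hs, hc2⟩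
    rw [hsub]
    set G : ℕ → ℝ := fun s => if s = 0 then 0 else -(W (s-1) - v q)⁻¹ * R with hG
    have hPG : ∀ s, s < (j:ℕ) → PP s = G (s+1) - G s := by
      intro s hsj
      have hsn : s < n+1 := by omega
      simp only [hPP, hG]
      rcases Nat.eq_zero_or_pos s with rfl | hs0
      · rw [if_pos rfl, if_pos rfl, if_neg (by omega), sub_zero, Nat.add_sub_cancel]
        rw [show v q - W 0 = -(W 0 - v q) from by ring, inv_neg, neg_mul]
      · rw [if_neg (by omega), if_neg (by omega), if_neg (by omega), if_neg (by omega),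
          Nat.add_sub_cancel]
        rw [show v q - W s = -(W s - v q) from by ring, inv_neg]
        ring
    rw [Finset.sum_congr rfl (fun s hs => hPG s (mem_range.mp hs)), Finset.sum_range_sub G (j:ℕ)]
    have hGj : G (j:ℕ) = -(W ((j:ℕ)-1) - v q)⁻¹ * R := by
      simp only [hG]; rw [if_neg (by omega)]
    have hG0 : G 0 = 0 := by simp [hG]
    rw [hGj, hG0, sub_zero, (show (j:ℕ)-1 = r from by omega), hWr,
      show v q - v i = -(v i - v q) from by ring, inv_neg, neg_mul]
  -- first group (back part)
  have hback : ∑ s ∈ range (n+2), (if ((j:ℕ) < s ∧ r = (j:ℕ)) then PP s else 0)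
      = (if r = (j:ℕ) then (v i - v q)⁻¹ else 0) * R := by
    by_cases hc1 : r = (j:ℕ)
    swap
    · rw [if_neg hc1, zero_mul]
      exact Finset.sum_eq_zero fun s _ => if_neg (fun hh => hc1 hh.2)
    rw [if_pos hc1]
    have hjn : (j:ℕ) ≤ n := by omega
    have hsub : ∑ s ∈ range (n+2), (if ((j:ℕ) < s ∧ r = (j:ℕ)) then PP s else 0)
        = ∑ s ∈ Ico ((j:ℕ)+1) (n+2), PP s := by
      rw [Finset.range_eq_Ico,
        ← Finset.sum_Ico_consecutive _ (Nat.zero_le ((j:ℕ)+1)) (by omega : (j:ℕ)+1 ≤ n+2)]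
      rw [Finset.sum_eq_zero (fun s hs => if_neg (fun hh => by
        rw [mem_Ico] at hs; omega)), zero_add]
      exact Finset.sum_congr rfl fun s hs => if_pos ⟨by rw [mem_Ico] at hs; omega, hc1⟩
    rw [hsub, Finset.sum_Ico_eq_sum_range]
    have hcnt : n + 2 - ((j:ℕ)+1) = n + 1 - (j:ℕ) := by omega
    rw [hcnt]
    set H : ℕ → ℝ := fun u => if (j:ℕ) + u ≤ n then (W ((j:ℕ)+u) - v q)⁻¹ * R else 0 with hH
    have hPH : ∀ u, u < n+1-(j:ℕ) → PP ((j:ℕ)+1+u) = H u - H (u+1) := by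
      intro u hu
      simp only [hPP, hH]
      rcases Nat.lt_or_ge ((j:ℕ)+u) n with hint | hlast
      · rw [if_neg (by omega), if_neg (by omega), if_pos (by omega), if_pos (by omega)]
        have h1 : (j:ℕ)+1+u-1 = (j:ℕ)+u := by omega
        have h2 : (j:ℕ)+(u+1) = (j:ℕ)+1+u := by omega
        rw [h1, h2]
        rw [show v q - W ((j:ℕ)+1+u) = -(W ((j:ℕ)+1+u) - v q) from by ring, inv_neg]
        ring
      · have hEq : (j:ℕ)+u = n := by omega
        rw [if_neg (by omega), if_pos (by omega), if_pos (by omega : (j:ℕ)+u ≤ n),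
          if_neg (by omega), hEq, sub_zero]
    rw [Finset.sum_congr rfl (fun u hu => hPH u (mem_range.mp hu)),
      Finset.sum_range_sub' H (n+1-(j:ℕ))]
    have hH0 : H 0 = (v i - v q)⁻¹ * R := by
      simp only [hH]
      rw [Nat.add_zero, if_pos hjn, show W (j:ℕ) = v i from by rw [← hc1]; exact hWr]
    have hHend : H (n+1-(j:ℕ)) = 0 := by
      simp only [hH]
      rw [if_neg (by omega)]
    rw [hH0, hHend, sub_zero]
  rw [hfront, hback]
  ring

lemma lemA : ∀ (n : ℕ) (v : Fin (n+1) → ℝ), Function.Injective v → ∀ (j i : Fin (n+1)),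
    ∑ σ : Equiv.Perm (Fin (n+1)),
      (if σ j = i then ∏ k : Fin n, (v (σ k.castSucc) - v (σ k.succ))⁻¹ else 0)
    = (-1 : ℝ)^(j:ℕ) * (n.choose (j:ℕ)) / ∏ k ∈ univ.erase i, (v i - v k) := by
  intro n
  induction n with
  | zero =>
    intro v hv j i
    have h1 : ∀ σ : Equiv.Perm (Fin 1), σ j = i := fun σ => Subsingleton.elim _ _
    have hj : (j:ℕ) = 0 := by omega
    have hi : i = 0 := Fin.ext (by omega)
    simp [h1, hj, hi, Finset.erase_singleton]
  | succ n IH =>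
    intro v hv j i
    obtain ⟨q, hqi⟩ := exists_ne i
    obtain ⟨i', hi'⟩ := Fin.exists_succAbove_eq (show i ≠ q from fun h => hqi h.symm)
    set w : Fin (n+1) → ℝ := fun m => v (q.succAbove m) with hw
    have hwinj : Function.Injective w :=
      fun a b h => Fin.succAbove_right_injective (p := q) (hv h)
    have hwi' : w i' = v i := by rw [hw]; simp [hi']
    -- reindex sum over permutations by insertion
    rw [← Fintype.sum_bijective _ (insPerm_bijective q)
      (fun p : Fin (n+2) × Equiv.Perm (Fin (n+1)) =>
        (if insPerm q p.1 p.2 j = i then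
          ∏ k : Fin (n+1), (v (insPerm q p.1 p.2 k.castSucc) - v (insPerm q p.1 p.2 k.succ))⁻¹
        else 0)) _ (fun p => rfl), Fintype.sum_prod_type, Finset.sum_comm]
    rw [Finset.sum_congr rfl (fun e _ => keyStep hv q i j hqi i' hi' e)]
    -- split into the two groups
    simp only [add_mul, Finset.sum_add_distrib]
    -- identify the two group sums
    have hgroup1 : ∑ e : Equiv.Perm (Fin (n+1)),
        (if ((e.symm i' : ℕ) = (j:ℕ)) then (v i - v q)⁻¹ else 0) * Rf v q e
        = (v i - v q)⁻¹ * ((-1 : ℝ)^(j:ℕ) * (n.choose (j:ℕ))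
            / ∏ k ∈ univ.erase i', (w i' - w k)) := by
      by_cases hj : (j:ℕ) < n+1
      · set jr : Fin (n+1) := ⟨(j:ℕ), hj⟩ with hjr
        have hcond : ∀ e : Equiv.Perm (Fin (n+1)), ((e.symm i' : ℕ) = (j:ℕ)) ↔ e jr = i' := by
          intro e
          constructor
          · intro h
            have : e.symm i' = jr := by ext; exact h
            rw [← this, Equiv.apply_symm_apply]
          · intro h
            rw [← h, Equiv.symm_apply_apply]
        have : ∀ e : Equiv.Perm (Fin (n+1)),
            (if ((e.symm i' : ℕ) = (j:ℕ)) then (v i - v q)⁻¹ else 0) * Rf v q e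
            = (v i - v q)⁻¹ * (if e jr = i' then
                ∏ k : Fin n, (w (e k.castSucc) - w (e k.succ))⁻¹ else 0) := by
          intro e
          by_cases h : e jr = i'
          · rw [if_pos ((hcond e).mpr h), if_pos h, ← Rf_eq v q e]
          · rw [if_neg (fun hh => h ((hcond e).mp hh)), if_neg h, zero_mul, mul_zero]
        rw [Finset.sum_congr rfl (fun e _ => this e), ← Finset.mul_sum, IH w hwinj jr i']
      · have hjeq : (j:ℕ) = n+1 := by omega
        have hch : n.choose (j:ℕ) = 0 := by rw [hjeq]; exact Nat.choose_succ_self n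
        rw [hch]
        rw [Finset.sum_eq_zero (fun e _ => by
          rw [if_neg (by omega : ¬((e.symm i' : ℕ) = (j:ℕ))), zero_mul])]
        norm_num
    have hgroup2 : ∑ e : Equiv.Perm (Fin (n+1)),
        (if ((e.symm i' : ℕ) + 1 = (j:ℕ)) then (v q - v i)⁻¹ else 0) * Rf v q e
        = (if 1 ≤ (j:ℕ) then (v q - v i)⁻¹ * ((-1 : ℝ)^((j:ℕ)-1) * (n.choose ((j:ℕ)-1))
            / ∏ k ∈ univ.erase i', (w i' - w k)) else 0) := by
      by_cases hj0 : 1 ≤ (j:ℕ)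
      swap
      · rw [if_neg hj0]
        exact Finset.sum_eq_zero (fun e _ => by
          rw [if_neg (by omega), zero_mul])
      rw [if_pos hj0]
      have hjlt : (j:ℕ) - 1 < n+1 := by omega
      set jr : Fin (n+1) := ⟨(j:ℕ)-1, hjlt⟩ with hjr
      have hcond : ∀ e : Equiv.Perm (Fin (n+1)), ((e.symm i' : ℕ) + 1 = (j:ℕ)) ↔ e jr = i' := by
        intro e
        constructor
        · intro h
          have : e.symm i' = jr := by ext; simp only [hjr]; omega
          rw [← this, Equiv.apply_symm_apply]
        · intro h
          have : e.symm i' = jr := by rw [← h, Equiv.symm_apply_apply]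
          have := congrArg Fin.val this
          simp only [hjr] at this
          omega
      have : ∀ e : Equiv.Perm (Fin (n+1)),
          (if ((e.symm i' : ℕ) + 1 = (j:ℕ)) then (v q - v i)⁻¹ else 0) * Rf v q e
          = (v q - v i)⁻¹ * (if e jr = i' then
              ∏ k : Fin n, (w (e k.castSucc) - w (e k.succ))⁻¹ else 0) := by
        intro e
        by_cases h : e jr = i'
        · rw [if_pos ((hcond e).mpr h), if_pos h, ← Rf_eq v q e]
        · rw [if_neg (fun hh => h ((hcond e).mp hh)), if_neg h, zero_mul, mul_zero]
      rw [Finset.sum_congr rfl (fun e _ => this e), ← Finset.mul_sum, IH w hwinj jr i']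
    rw [hgroup1, hgroup2]
    -- denominator identity
    have hq_mem : q ∈ (univ : Finset (Fin (n+2))).erase i := mem_erase.mpr ⟨hqi, mem_univ q⟩
    have hD : ∏ k ∈ univ.erase i, (v i - v k)
        = (v i - v q) * ∏ k ∈ univ.erase i', (w i' - w k) := by
      rw [← Finset.mul_prod_erase _ _ hq_mem]
      congr 1
      have himg : Finset.image q.succAbove (univ.erase i') = (univ.erase i).erase q := by
        rw [Finset.image_erase (Fin.succAbove_right_injective (p := q)), hi',
          Fin.image_succAbove_univ, Finset.compl_singleton]
        ext x
        simp only [Finset.mem_erase]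
        tauto
      rw [← himg, Finset.prod_image
        (fun a _ b _ h => Fin.succAbove_right_injective (p := q) h)]
      refine Finset.prod_congr rfl fun k _ => ?_
      rw [hwi']
    rw [hD]
    -- final algebra
    by_cases hj0 : 1 ≤ (j:ℕ)
    · rw [if_pos hj0]
      obtain ⟨m, hm⟩ : ∃ m, (j:ℕ) = m + 1 := ⟨(j:ℕ)-1, by omega⟩
      rw [hm, Nat.add_sub_cancel]
      have hpascal : ((n+1).choose (m+1) : ℝ) = n.choose m + n.choose (m+1) := by
        rw [Nat.choose_succ_succ]
        push_cast
        ring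
      rw [hpascal]
      have hvq : (v q - v i)⁻¹ = -(v i - v q)⁻¹ := by
        rw [show v q - v i = -(v i - v q) from by ring, inv_neg]
      rw [hvq, div_eq_mul_inv, div_eq_mul_inv, div_eq_mul_inv, mul_inv]
      ring
    · rw [if_neg hj0, add_zero]
      have hj : (j:ℕ) = 0 := by omega
      rw [hj, Nat.choose_zero_right, Nat.choose_zero_right,
        div_eq_mul_inv, div_eq_mul_inv, mul_inv]
      ring



open Polynomial in
lemma lemB (n : ℕ) (Y : ℝ) (v : Fin (n+1) → ℝ) (hv : Function.Injective v) :
    ∑ i : Fin (n+1), (v i - Y)^n / ∏ k ∈ univ.erase i, (v i - v k) = 1 := by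
  classical
  set p : ℝ[X] := (X - C Y)^n with hp
  have hmp : p.Monic := (monic_X_sub_C Y).pow n
  have hdegp : p.natDegree = n := by
    simp [hp, natDegree_pow]
  have hdeg : p.degree < (#(univ : Finset (Fin (n+1))) : ℕ) := by
    rw [card_univ, Fintype.card_fin]
    calc p.degree ≤ p.natDegree := degree_le_natDegree
    _ < (n+1 : ℕ) := by rw [hdegp]; exact_mod_cast Nat.lt_succ_self n
  have h := Lagrange.eq_interpolate (s := (univ : Finset (Fin (n+1)))) (v := v)
    hv.injOn hdeg
  have hc := congrArg (fun q : ℝ[X] => q.coeff n) h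
  simp only [Lagrange.interpolate_apply] at hc
  have hL : p.coeff n = 1 := by
    have := hmp.coeff_natDegree
    rwa [hdegp] at this
  rw [finset_sum_coeff] at hc
  have hbasis : ∀ i : Fin (n+1),
      (C (p.eval (v i)) * Lagrange.basis univ v i).coeff n
        = (v i - Y)^n * (∏ k ∈ univ.erase i, (v i - v k))⁻¹ := by
    intro i
    rw [coeff_C_mul]
    have hdb : (Lagrange.basis univ v i).natDegree = n := by
      have := Lagrange.degree_basis hv.injOn (mem_univ i)
      rw [card_univ, Fintype.card_fin] at this
      simpa using natDegree_eq_of_degree_eq_some this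
    have hco : (Lagrange.basis univ v i).coeff n = (Lagrange.basis univ v i).leadingCoeff := by
      rw [Polynomial.leadingCoeff, hdb]
    rw [hco]
    have : (Lagrange.basis univ v i).leadingCoeff
        = ∏ k ∈ univ.erase i, (v i - v k)⁻¹ := by
      rw [Lagrange.basis, leadingCoeff_prod]
      refine Finset.prod_congr rfl fun k hk => ?_
      have hne : v i ≠ v k := fun hh => (mem_erase.mp hk).1 (hv hh).symm
      rw [Lagrange.basisDivisor, leadingCoeff_mul, leadingCoeff_C, leadingCoeff_X_sub_C, mul_one]
    rw [this, ← Finset.prod_inv_distrib]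
    congr 1
    simp [hp, eval_pow]
  rw [Finset.sum_congr rfl (fun i _ => hbasis i)] at hc
  rw [hL] at hc
  simp_rw [div_eq_mul_inv]
  exact hc.symm

theorem stmt7 (n : ℕ) (Y : ℝ) (l : Fin (n+1) → ℝ) (hl : Function.Injective l)
    (j : Fin (n+1)) :
    ∑ σ : Equiv.Perm (Fin (n+1)), ∏ k : Fin n,
      (l (σ j) - Y) / (l (σ k.castSucc) - l (σ k.succ))
    = (-1 : ℝ)^(j : ℕ) * (n.choose j) := by
  classical
  have step1 : ∀ σ : Equiv.Perm (Fin (n+1)),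
      ∏ k : Fin n, (l (σ j) - Y) / (l (σ k.castSucc) - l (σ k.succ))
      = (l (σ j) - Y)^n * ∏ k : Fin n, (l (σ k.castSucc) - l (σ k.succ))⁻¹ := by
    intro σ
    rw [Finset.prod_div_distrib, Finset.prod_const, card_univ, Fintype.card_fin,
      div_eq_mul_inv, ← Finset.prod_inv_distrib]
  rw [Finset.sum_congr rfl (fun σ _ => step1 σ)]
  have step2 : ∀ σ : Equiv.Perm (Fin (n+1)),
      (l (σ j) - Y)^n * ∏ k : Fin n, (l (σ k.castSucc) - l (σ k.succ))⁻¹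
      = ∑ i : Fin (n+1), (l i - Y)^n *
          (if σ j = i then ∏ k : Fin n, (l (σ k.castSucc) - l (σ k.succ))⁻¹ else 0) := by
    intro σ
    rw [Finset.sum_eq_single (σ j)]
    · rw [if_pos rfl]
    · intro b _ hb
      rw [if_neg (fun hh => hb hh.symm), mul_zero]
    · intro h
      exact absurd (mem_univ (σ j)) h
  rw [Finset.sum_congr rfl (fun σ _ => step2 σ), Finset.sum_comm]
  have step3 : ∀ i : Fin (n+1),
      ∑ σ : Equiv.Perm (Fin (n+1)), (l i - Y)^n *
          (if σ j = i then ∏ k : Fin n, (l (σ k.castSucc) - l (σ k.succ))⁻¹ else 0)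
      = (l i - Y)^n * ((-1 : ℝ)^(j:ℕ) * (n.choose (j:ℕ))
          / ∏ k ∈ univ.erase i, (l i - l k)) := by
    intro i
    rw [← Finset.mul_sum, lemA n l hl j i]
  rw [Finset.sum_congr rfl (fun i _ => step3 i)]
  have step4 : ∑ i : Fin (n+1), (l i - Y)^n * ((-1 : ℝ)^(j:ℕ) * (n.choose (j:ℕ))
      / ∏ k ∈ univ.erase i, (l i - l k))
      = ((-1 : ℝ)^(j:ℕ) * (n.choose (j:ℕ))) *
        ∑ i : Fin (n+1), (l i - Y)^n / ∏ k ∈ univ.erase i, (l i - l k) := by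
    rw [Finset.mul_sum]
    refine Finset.sum_congr rfl fun i _ => ?_
    rw [div_eq_mul_inv, div_eq_mul_inv]
    ring
  rw [step4, lemB n Y l hl, mul_one]
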